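/- Two closed PGA terms denote the same finite or eventually periodic infinite sequence of primitive instructions if and only if they are provably equal from the axioms PGA1–PGA4 (soundness and completeness of PGA with respect to instruction sequence equivalence). -/

import Mathlib

/-- Single-pass instruction sequences: terms of program algebra (PGA) over a set
`I` of primitive instructions, built from instruction constants, concatenation `;`
and repetition `*`. -/
inductive PGA (I : Type) : Type
  | ins : I → PGA I
  | conc : PGA I → PGA I → PGA I
  | rep : PGA I → PGA I

namespace PGA

variable {I : Type}

/-- `pow X n` is `X^n` for `n ≥ 1` (with `pow X 0` defined as `X`, a junk value):
`X^1 = X` and `X^(n+1) = X ; X^n`. -/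
def pow (X : PGA I) : ℕ → PGA I
  | 0 => X
  | 1 => X
  | n + 2 => conc X (pow X (n + 1))

/-- Derivable equality of PGA terms from the axioms PGA1–PGA4 (closed under
equational logic). -/
inductive Eq : PGA I → PGA I → Prop
  | refl (x : PGA I) : Eq x x
  | symm {x y : PGA I} : Eq x y → Eq y x
  | trans {x y z : PGA I} : Eq x y → Eq y z → Eq x z
  | concCongr {x x' y y' : PGA I} : Eq x x' → Eq y y' → Eq (conc x y) (conc x' y')
  | repCongr {x x' : PGA I} : Eq x x' → Eq (rep x) (rep x')
  | pga1 (x y z : PGA I) : Eq (conc (conc x y) z) (conc x (conc y z))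
  | pga2 (x : PGA I) (n : ℕ) (h : 1 ≤ n) : Eq (rep (pow x n)) (rep x)
  | pga3 (x y : PGA I) : Eq (conc (rep x) y) (rep x)
  | pga4 (x y : PGA I) : Eq (rep (conc x y)) (conc x (rep (conc y x)))


/-- The length of the instruction sequence denoted by a PGA term: `some k` if it
is finite of length `k`, `none` if it is infinite. -/
def len? : PGA I → Option ℕ
  | ins _ => some 1
  | conc P Q => (len? P).bind fun k => (len? Q).map fun l => k + l
  | rep _ => none

/-- The finite or eventually periodic infinite sequence of primitive instructions
denoted by a PGA term, as a function giving the instruction at each position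
(`none` beyond the end of a finite sequence).  An instruction constant denotes the
one-element sequence; `P ; Q` denotes the concatenation of the denoted sequences
(and the sequence of `P` if that is infinite); `P*` denotes the infinite
repetition of the (finite prefix of the) sequence denoted by `P`. -/
def sem : PGA I → ℕ → Option I
  | ins a, n => if n = 0 then some a else none
  | conc P Q, n =>
      match len? P with
      | some k => if n < k then sem P n else sem Q (n - k)
      | none => sem P n
  | rep P, n =>
      match len? P with
      | some k => sem P (n % k)
      | none => sem P n

end PGA
namespace PGA

variable {I : Type}

lemma sem_conc (P Q : PGA I) (n : ℕ) :
    sem (conc P Q) n = match len? P with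
      | some k => if n < k then sem P n else sem Q (n - k)
      | none => sem P n := rfl

lemma sem_rep (P : PGA I) (n : ℕ) :
    sem (rep P) n = match len? P with
      | some k => sem P (n % k)
      | none => sem P n := rfl

lemma sem_conc_some {P : PGA I} {k : ℕ} (h : len? P = some k) (Q : PGA I) (n : ℕ) :
    sem (conc P Q) n = if n < k then sem P n else sem Q (n - k) := by
  rw [sem_conc, h]

lemma sem_conc_none {P : PGA I} (h : len? P = none) (Q : PGA I) (n : ℕ) :
    sem (conc P Q) n = sem P n := by
  rw [sem_conc, h]

lemma sem_rep_some {P : PGA I} {k : ℕ} (h : len? P = some k) (n : ℕ) :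
    sem (rep P) n = sem P (n % k) := by
  rw [sem_rep, h]

lemma sem_rep_none {P : PGA I} (h : len? P = none) (n : ℕ) :
    sem (rep P) n = sem P n := by
  rw [sem_rep, h]

lemma len?_conc_ss {P Q : PGA I} {k l : ℕ} (h1 : len? P = some k) (h2 : len? Q = some l) :
    len? (conc P Q) = some (k + l) := by simp [len?, h1, h2]

lemma len?_conc_sn {P Q : PGA I} {k : ℕ} (h1 : len? P = some k) (h2 : len? Q = none) :
    len? (conc P Q) = none := by simp [len?, h1, h2]

lemma len?_conc_n {P : PGA I} (h1 : len? P = none) (Q : PGA I) :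
    len? (conc P Q) = none := by simp [len?, h1]

lemma len?_pos : ∀ {P : PGA I} {k : ℕ}, len? P = some k → 1 ≤ k
  | ins _, k, h => by simp [len?] at h; omega
  | conc P Q, k, h => by
      simp only [len?, Option.bind_eq_some_iff, Option.map_eq_some_iff] at h
      obtain ⟨a, ha, b, hb, rfl⟩ := h
      have := len?_pos ha; omega
  | rep _, k, h => by simp [len?] at h

lemma isSome_sem : ∀ (P : PGA I) (n : ℕ), (sem P n).isSome ↔ ∀ k ∈ len? P, n < k := by
  intro P
  induction P with
  | ins a => intro n; by_cases h : n = 0 <;> simp [sem, len?, h] <;> omega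
  | conc P Q ihP ihQ =>
      intro n
      cases hP : len? P with
      | none => simp [sem_conc_none hP, len?_conc_n hP, ihP, hP]
      | some k =>
          rw [sem_conc_some hP]
          cases hQ : len? Q with
          | none =>
              rw [len?_conc_sn hP hQ]
              by_cases h : n < k
              · simp [h, ihP, hP]
              · simp [h, ihQ, hQ]
          | some l =>
              rw [len?_conc_ss hP hQ]
              by_cases h : n < k
              · simp only [if_pos h, ihP, hP]; simp; omega
              · simp only [if_neg h, ihQ, hQ]; simp; omega
  | rep P ihP =>
      intro n
      cases hP : len? P with
      | none => simp [sem_rep_none hP, len?, ihP, hP]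
      | some k =>
          have hk : 1 ≤ k := len?_pos hP
          rw [sem_rep_some hP]
          simp only [len?]
          simp only [ihP, hP]
          simp [Nat.mod_lt _ hk]

lemma len?_eq_of_sem {P Q : PGA I} (h : sem P = sem Q) : len? P = len? Q := by
  have key : ∀ n, ((sem P n).isSome ↔ (sem Q n).isSome) := fun n => by rw [h]
  cases hP : len? P with
  | none =>
      cases hQ : len? Q with
      | none => rfl
      | some l =>
          have h1 := (key l).mp (by rw [isSome_sem, hP]; simp)
          rw [isSome_sem, hQ] at h1
          simp at h1
  | some k =>
      cases hQ : len? Q with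
      | none =>
          have h1 := (key k).mpr (by rw [isSome_sem, hQ]; simp)
          rw [isSome_sem, hP] at h1
          simp at h1
      | some l =>
          congr 1
          by_contra hne
          rcases Nat.lt_or_ge k l with hlt | hge
          · have h1 := (key k).mpr (by rw [isSome_sem, hQ]; simpa)
            rw [isSome_sem, hP] at h1
            simp at h1
          · have hlt : l < k := by omega
            have h1 := (key l).mp (by rw [isSome_sem, hP]; simpa)
            rw [isSome_sem, hQ] at h1
            simp at h1

lemma len?_pow_none {x : PGA I} (h : len? x = none) : ∀ n, len? (pow x n) = none
  | 0 => h
  | 1 => h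
  | n + 2 => by simp [pow, len?, h]

lemma sem_pow_none {x : PGA I} (h : len? x = none) (n m : ℕ) : sem (pow x n) m = sem x m := by
  match n with
  | 0 => rfl
  | 1 => rfl
  | n + 2 => rw [show pow x (n+2) = conc x (pow x (n+1)) from rfl, sem_conc_none h]

lemma len?_pow {x : PGA I} {k : ℕ} (h : len? x = some k) :
    ∀ n, 1 ≤ n → len? (pow x n) = some (n * k)
  | 1, _ => by simp [pow, h]
  | n + 2, _ => by
      have ih := len?_pow h (n + 1) (by omega)
      show len? (conc x (pow x (n+1))) = _
      simp [len?, h, ih]; ring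

lemma sem_pow {x : PGA I} {k : ℕ} (h : len? x = some k) :
    ∀ n, 1 ≤ n → ∀ m, m < n * k → sem (pow x n) m = sem x (m % k)
  | 1, _, m, hm => by
      rw [show pow x 1 = x from rfl, Nat.mod_eq_of_lt (by omega)]
  | n + 2, _, m, hm => by
      have ih := sem_pow h (n + 1) (by omega)
      rw [show pow x (n+2) = conc x (pow x (n+1)) from rfl, sem_conc_some h]
      by_cases hmk : m < k
      · simp [hmk, Nat.mod_eq_of_lt hmk]
      · simp only [if_neg hmk]
        have hexp : (n + 2) * k = k + (n + 1) * k := by ring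
        rw [ih (m - k) (by omega)]
        congr 1
        conv_rhs => rw [show m = k + (m - k) by omega]
        rw [Nat.add_mod_left]

theorem Eq.sound {P Q : PGA I} (h : PGA.Eq P Q) : sem P = sem Q := by
  induction h with
  | refl x => rfl
  | symm _ ih => exact ih.symm
  | trans _ _ ih1 ih2 => exact ih1.trans ih2
  | @concCongr x x' y y' _ _ ihx ihy =>
      funext n
      rw [sem_conc, sem_conc, len?_eq_of_sem ihx]
      cases len? x' with
      | none => exact congrFun ihx n
      | some k =>
          by_cases h : n < k
          · simp [h, congrFun ihx n]
          · simp [h, congrFun ihy (n - k)]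
  | @repCongr x x' _ ihx =>
      funext n
      rw [sem_rep, sem_rep, len?_eq_of_sem ihx]
      cases len? x' with
      | none => exact congrFun ihx n
      | some k => exact congrFun ihx (n % k)
  | pga1 x y z =>
      funext n
      cases hx : len? x with
      | none =>
          rw [sem_conc_none (len?_conc_n hx y), sem_conc_none hx, sem_conc_none hx]
      | some k =>
          cases hy : len? y with
          | none =>
              rw [sem_conc_none (len?_conc_sn hx hy), sem_conc_some hx,
                sem_conc_some hx, sem_conc_none hy]
          | some l =>
              rw [sem_conc_some (len?_conc_ss hx hy), sem_conc_some hx,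
                sem_conc_some hx, sem_conc_some hy]
              by_cases h1 : n < k
              · rw [if_pos (show n < k + l by omega), if_pos h1, if_pos h1]
              · by_cases h2 : n < k + l
                · rw [if_pos h2, if_neg h1, if_neg h1, if_pos (show n - k < l by omega)]
                · rw [if_neg h2, if_neg h1, if_neg (show ¬ n - k < l by omega)]
                  congr 1; omega
  | pga2 x n hn =>
      funext m
      cases hx : len? x with
      | none =>
          rw [sem_rep_none (len?_pow_none hx n), sem_rep_none hx, sem_pow_none hx]
      | some k =>
          have hk := len?_pos hx
          rw [sem_rep_some (len?_pow hx n hn), sem_rep_some hx]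
          have hnk : 0 < n * k := by positivity
          rw [sem_pow hx n hn _ (Nat.mod_lt _ hnk)]
          rw [Nat.mod_mod_of_dvd _ ⟨n, by ring⟩]
  | pga3 x y =>
      funext n
      rw [sem_conc_none (by simp [len?]) y]
  | pga4 x y =>
      funext n
      cases hx : len? x with
      | none =>
          rw [sem_rep_none (len?_conc_n hx y), sem_conc_none hx, sem_conc_none hx]
      | some k =>
          have hk := len?_pos hx
          cases hy : len? y with
          | none =>
              rw [sem_rep_none (len?_conc_sn hx hy), sem_conc_some hx, sem_conc_some hx,
                sem_rep_none (len?_conc_n hy x), sem_conc_none hy]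
          | some l =>
              rw [sem_rep_some (len?_conc_ss hx hy), sem_conc_some hx, sem_conc_some hx,
                sem_rep_some (len?_conc_ss hy hx), sem_conc_some hy]
              by_cases h1 : n < k
              · rw [Nat.mod_eq_of_lt (by omega), if_pos h1, if_pos h1]
              · rw [if_neg h1, Nat.add_comm l k]
                have hl := len?_pos hy
                have hjlt : (n - k) % (k + l) < k + l := Nat.mod_lt _ (by omega)
                have hmod : n % (k + l) = (k + (n - k) % (k + l)) % (k + l) := by
                  conv_lhs => rw [show n = k + (n - k) by omega]
                  rw [Nat.add_mod k (n - k) (k + l),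
                    Nat.mod_eq_of_lt (show k < k + l by omega)]
                rw [hmod]
                set j := (n - k) % (k + l) with hj
                by_cases h2 : j < l
                · rw [Nat.mod_eq_of_lt (show k + j < k + l by omega),
                    if_neg (by omega), if_pos h2]
                  congr 1; omega
                · have he : (k + j) % (k + l) = j - l := by
                    rw [Nat.mod_eq_sub_mod (by omega),
                      show k + j - (k + l) = j - l by omega,
                      Nat.mod_eq_of_lt (by omega)]
                  rw [he, if_pos (by omega), if_neg h2]

end PGA
namespace PGA

variable {I : Type}

/-- The term denoting the nonempty finite instruction sequence `a :: l`. -/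
def toT : I → List I → PGA I
  | a, [] => ins a
  | a, b :: l => conc (ins a) (toT b l)

/-- Prefix `u` followed by the repetition of `X`. -/
def ofInfR : List I → PGA I → PGA I
  | [], X => rep X
  | a :: l, X => conc (toT a l) (rep X)

/-- The term denoting `u · (b :: m)^ω`. -/
def ofInf (u : List I) (b : I) (m : List I) : PGA I := ofInfR u (toT b m)

lemma toT_append (a : I) (l : List I) (b : I) (m : List I) :
    PGA.Eq (conc (toT a l) (toT b m)) (toT a (l ++ b :: m)) := by
  induction l generalizing a with
  | nil => exact PGA.Eq.refl _
  | cons c l ih =>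
      exact (PGA.Eq.pga1 _ _ _).trans (PGA.Eq.concCongr (PGA.Eq.refl _) (ih c))

lemma ofInfR_congr (u : List I) {X Y : PGA I} (h : PGA.Eq (rep X) (rep Y)) :
    PGA.Eq (ofInfR u X) (ofInfR u Y) := by
  cases u with
  | nil => exact h
  | cons a l => exact PGA.Eq.concCongr (PGA.Eq.refl _) h

lemma rep_unfold (X : PGA I) : PGA.Eq (rep X) (conc X (rep X)) :=
  ((PGA.Eq.pga2 X 2 (by omega)).symm.trans (PGA.Eq.pga4 X X)).trans
    (PGA.Eq.concCongr (PGA.Eq.refl X) (PGA.Eq.pga2 X 2 (by omega)))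

lemma rep_rep (X : PGA I) : PGA.Eq (rep (rep X)) (rep X) :=
  (((PGA.Eq.pga2 (rep X) 2 (by omega)).symm.trans (PGA.Eq.pga4 (rep X) (rep X))).trans
    (PGA.Eq.concCongr (PGA.Eq.refl _) (PGA.Eq.pga2 (rep X) 2 (by omega)))).trans
    (PGA.Eq.pga3 X (rep (rep X)))

lemma rep_ofInfR (u : List I) (X : PGA I) : PGA.Eq (rep (ofInfR u X)) (ofInfR u X) := by
  cases u with
  | nil => exact rep_rep X
  | cons a l =>
      exact (PGA.Eq.pga4 _ _).trans
        (PGA.Eq.concCongr (PGA.Eq.refl _)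
          ((PGA.Eq.repCongr (PGA.Eq.pga3 X (toT a l))).trans (rep_rep X)))

lemma ofInfR_absorb (u : List I) (X : PGA I) (Q : PGA I) :
    PGA.Eq (conc (ofInfR u X) Q) (ofInfR u X) := by
  cases u with
  | nil => exact PGA.Eq.pga3 X Q
  | cons a l =>
      exact (PGA.Eq.pga1 _ _ _).trans
        (PGA.Eq.concCongr (PGA.Eq.refl _) (PGA.Eq.pga3 X Q))

lemma conc_fin_inf (a : I) (l : List I) (u : List I) (X : PGA I) :
    PGA.Eq (conc (toT a l) (ofInfR u X)) (ofInfR (a :: (l ++ u)) X) := by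
  cases u with
  | nil => simp only [List.append_nil]; exact PGA.Eq.refl _
  | cons c u' =>
      exact ((PGA.Eq.pga1 _ _ _).symm).trans
        (PGA.Eq.concCongr (toT_append a l c u') (PGA.Eq.refl _))

/-- Head of the rotated period. -/
def rhd : I → List I → I
  | b, [] => b
  | _, c :: _ => c

/-- Tail of the rotated period. -/
def rtl : I → List I → List I
  | _, [] => []
  | b, _ :: m' => m' ++ [b]

lemma rtl_length (b : I) (m : List I) : (rtl b m).length = m.length := by
  cases m <;> simp [rtl]

lemma shift (b : I) (m : List I) :
    PGA.Eq (rep (toT b m)) (conc (ins b) (rep (toT (rhd b m) (rtl b m)))) := by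
  cases m with
  | nil => exact rep_unfold (ins b)
  | cons c m' =>
      exact (PGA.Eq.pga4 (ins b) (toT c m')).trans
        (PGA.Eq.concCongr (PGA.Eq.refl _) (PGA.Eq.repCongr (toT_append c m' b [])))

lemma extend1 (u : List I) (b : I) (m : List I) :
    PGA.Eq (ofInf u b m) (ofInf (u ++ [b]) (rhd b m) (rtl b m)) := by
  cases u with
  | nil => exact shift b m
  | cons a l =>
      refine (PGA.Eq.concCongr (PGA.Eq.refl (toT a l)) (shift b m)).trans ?_
      refine ((PGA.Eq.pga1 _ _ _).symm).trans ?_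
      exact PGA.Eq.concCongr (toT_append a l b []) (PGA.Eq.refl _)

lemma extendN (k : ℕ) (u : List I) (b : I) (m : List I) :
    ∃ u' b' m', PGA.Eq (ofInf u b m) (ofInf u' b' m') ∧
      u'.length = u.length + k ∧ m'.length = m.length := by
  induction k generalizing u b m with
  | zero => exact ⟨u, b, m, PGA.Eq.refl _, by omega, rfl⟩
  | succ k ih =>
      obtain ⟨u', b', m', h, hu, hm⟩ := ih (u ++ [b]) (rhd b m) (rtl b m)
      exact ⟨u', b', m', (extend1 u b m).trans h,
        by simp at hu; omega, by rw [hm, rtl_length]⟩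

lemma pow_toT (b : I) (m : List I) :
    ∀ k, PGA.Eq (pow (toT b m) (k + 1))
      (toT b (m ++ (List.replicate k (b :: m)).flatten))
  | 0 => by
      simp only [List.replicate, List.flatten_nil, List.append_nil]
      exact PGA.Eq.refl _
  | k + 1 => by
      have ih := pow_toT b m k
      have step : PGA.Eq (pow (toT b m) (k + 2))
          (toT b (m ++ b :: (m ++ (List.replicate k (b :: m)).flatten))) :=
        (PGA.Eq.concCongr (PGA.Eq.refl (toT b m)) ih).trans (toT_append _ _ _ _)
      have : m ++ b :: (m ++ (List.replicate k (b :: m)).flatten)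
          = m ++ (List.replicate (k + 1) (b :: m)).flatten := by
        simp [List.replicate_succ]
      rwa [this] at step

lemma powInf (k : ℕ) (u : List I) (b : I) (m : List I) :
    ∃ m', PGA.Eq (ofInf u b m) (ofInf u b m') ∧
      m'.length + 1 = (m.length + 1) * (k + 1) := by
  refine ⟨m ++ (List.replicate k (b :: m)).flatten, ?_, ?_⟩
  · refine ofInfR_congr u ?_
    exact ((PGA.Eq.repCongr (pow_toT b m k)).symm.trans
      (PGA.Eq.pga2 (toT b m) (k + 1) (by omega))).symm
  · simp [List.length_flatten, List.map_replicate]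
    ring

lemma len?_toT (a : I) (l : List I) : len? (toT a l) = some (l.length + 1) := by
  induction l generalizing a with
  | nil => rfl
  | cons b l ih => simp [toT, len?, ih b]; omega

lemma sem_toT (a : I) (l : List I) (n : ℕ) : sem (toT a l) n = (a :: l)[n]? := by
  induction l generalizing a n with
  | nil => cases n <;> simp [toT, sem]
  | cons b l ih =>
      show sem (conc (ins a) (toT b l)) n = _
      rw [sem_conc_some (show len? (ins a) = some 1 from rfl)]
      cases n with
      | zero => simp [sem]
      | succ n => simp [ih b n]

lemma sem_ofInf (u : List I) (b : I) (m : List I) (n : ℕ) :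
    sem (ofInf u b m) n =
      if n < u.length then u[n]? else (b :: m)[(n - u.length) % (m.length + 1)]? := by
  cases u with
  | nil =>
      show sem (rep (toT b m)) n = _
      rw [sem_rep_some (len?_toT b m), sem_toT]
      simp
  | cons a l =>
      show sem (conc (toT a l) (rep (toT b m))) n = _
      rw [sem_conc_some (len?_toT a l), sem_rep_some (len?_toT b m), sem_toT, sem_toT]
      simp only [List.length_cons]

lemma isSome_sem_ofInf (u : List I) (b : I) (m : List I) (n : ℕ) :
    (sem (ofInf u b m) n).isSome := by
  rw [sem_ofInf]
  by_cases h : n < u.length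
  · simp [h, List.getElem?_eq_getElem h]
  · have : (n - u.length) % (m.length + 1) < (b :: m).length :=
      by simpa using Nat.mod_lt _ (show m.length + 1 > 0 by omega)
    simp [h, List.getElem?_eq_getElem this]

lemma ofInf_inj {u₁ u₂ : List I} {b₁ b₂ : I} {m₁ m₂ : List I}
    (h : sem (ofInf u₁ b₁ m₁) = sem (ofInf u₂ b₂ m₂))
    (hu : u₁.length = u₂.length) (hm : m₁.length = m₂.length) :
    u₁ = u₂ ∧ b₁ = b₂ ∧ m₁ = m₂ := by
  have key : ∀ n, (if n < u₁.length then u₁[n]? else (b₁ :: m₁)[(n - u₁.length) % (m₁.length + 1)]?)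
      = (if n < u₂.length then u₂[n]? else (b₂ :: m₂)[(n - u₂.length) % (m₂.length + 1)]?) := by
    intro n
    have := congrFun h n
    rwa [sem_ofInf, sem_ofInf] at this
  have hueq : u₁ = u₂ := by
    apply List.ext_getElem? (fun n => ?_)
    by_cases hn : n < u₁.length
    · have := key n
      rw [if_pos hn, if_pos (hu ▸ hn)] at this
      exact this
    · rw [List.getElem?_eq_none (by omega), List.getElem?_eq_none (by omega)]
  have hceq : b₁ :: m₁ = b₂ :: m₂ := by
    apply List.ext_getElem? (fun j => ?_)
    by_cases hj : j < m₁.length + 1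
    · have := key (u₁.length + j)
      rw [if_neg (by omega), if_neg (by omega),
        show u₁.length + j - u₁.length = j from by omega,
        show u₁.length + j - u₂.length = j from by omega,
        Nat.mod_eq_of_lt hj, Nat.mod_eq_of_lt (by omega)] at this
      exact this
    · rw [List.getElem?_eq_none (by simpa using hj),
        List.getElem?_eq_none (by simp; omega)]
  exact ⟨hueq, by injection hceq, by injection hceq⟩

theorem normal (P : PGA I) :
    (∃ a l, PGA.Eq P (toT a l)) ∨ (∃ u b m, PGA.Eq P (ofInf u b m)) := by
  induction P with
  | ins a => exact Or.inl ⟨a, [], PGA.Eq.refl _⟩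
  | conc P Q ihP ihQ =>
      rcases ihP with ⟨a, l, hP⟩ | ⟨u, b, m, hP⟩
      · rcases ihQ with ⟨c, p, hQ⟩ | ⟨u, c, p, hQ⟩
        · exact Or.inl ⟨a, l ++ c :: p,
            (PGA.Eq.concCongr hP hQ).trans (toT_append a l c p)⟩
        · exact Or.inr ⟨a :: (l ++ u), c, p,
            (PGA.Eq.concCongr hP hQ).trans (conc_fin_inf a l u (toT c p))⟩
      · exact Or.inr ⟨u, b, m,
          (PGA.Eq.concCongr hP (PGA.Eq.refl Q)).trans (ofInfR_absorb u (toT b m) Q)⟩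
  | rep P ihP =>
      rcases ihP with ⟨a, l, hP⟩ | ⟨u, b, m, hP⟩
      · exact Or.inr ⟨[], a, l, PGA.Eq.repCongr hP⟩
      · exact Or.inr ⟨u, b, m, (PGA.Eq.repCongr hP).trans (rep_ofInfR u (toT b m))⟩

end PGA
/-- Soundness and completeness of PGA with respect to instruction sequence
equivalence: two closed PGA terms denote the same finite or eventually periodic
infinite sequence of primitive instructions iff they are provably equal from the
axioms PGA1–PGA4. -/
theorem pga_sound_complete {I : Type} (P Q : PGA I) :
    PGA.sem P = PGA.sem Q ↔ PGA.Eq P Q := by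
  constructor
  · intro h
    rcases PGA.normal P with ⟨a₁, l₁, hP⟩ | ⟨u₁, b₁, m₁, hP⟩ <;>
      rcases PGA.normal Q with ⟨a₂, l₂, hQ⟩ | ⟨u₂, b₂, m₂, hQ⟩
    · -- both finite
      have hs : PGA.sem (PGA.toT a₁ l₁) = PGA.sem (PGA.toT a₂ l₂) :=
        hP.sound.symm.trans (h.trans hQ.sound)
      have hl : (a₁ :: l₁) = (a₂ :: l₂) := by
        apply List.ext_getElem? (fun n => ?_)
        have := congrFun hs n
        rwa [PGA.sem_toT, PGA.sem_toT] at this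
      obtain ⟨rfl, rfl⟩ : a₁ = a₂ ∧ l₁ = l₂ := ⟨by injection hl, by injection hl⟩
      exact hP.trans hQ.symm
    · -- finite vs infinite: impossible
      exfalso
      have hs : PGA.sem (PGA.toT a₁ l₁) = PGA.sem (PGA.ofInf u₂ b₂ m₂) :=
        hP.sound.symm.trans (h.trans hQ.sound)
      have h1 := PGA.isSome_sem_ofInf u₂ b₂ m₂ (l₁.length + 1)
      rw [← hs, PGA.sem_toT, List.getElem?_eq_none (by simp)] at h1
      simp at h1
    · -- infinite vs finite: impossible
      exfalso
      have hs : PGA.sem (PGA.toT a₂ l₂) = PGA.sem (PGA.ofInf u₁ b₁ m₁) :=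
        hQ.sound.symm.trans (h.symm.trans hP.sound)
      have h1 := PGA.isSome_sem_ofInf u₁ b₁ m₁ (l₂.length + 1)
      rw [← hs, PGA.sem_toT, List.getElem?_eq_none (by simp)] at h1
      simp at h1
    · -- both infinite
      obtain ⟨m₁', e₁, hm₁⟩ := PGA.powInf m₂.length u₁ b₁ m₁
      obtain ⟨m₂', e₂, hm₂⟩ := PGA.powInf m₁.length u₂ b₂ m₂
      set L := max u₁.length u₂.length with hL
      obtain ⟨u₁'', b₁'', m₁'', e₁', hu₁, hm₁'⟩ := PGA.extendN (L - u₁.length) u₁ b₁ m₁'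
      obtain ⟨u₂'', b₂'', m₂'', e₂', hu₂, hm₂'⟩ := PGA.extendN (L - u₂.length) u₂ b₂ m₂'
      have c₁ : PGA.Eq P (PGA.ofInf u₁'' b₁'' m₁'') := hP.trans (e₁.trans e₁')
      have c₂ : PGA.Eq Q (PGA.ofInf u₂'' b₂'' m₂'') := hQ.trans (e₂.trans e₂')
      have hsem : PGA.sem (PGA.ofInf u₁'' b₁'' m₁'') = PGA.sem (PGA.ofInf u₂'' b₂'' m₂'') :=
        c₁.sound.symm.trans (h.trans c₂.sound)
      have hle₁ : u₁.length ≤ L := le_max_left _ _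
      have hle₂ : u₂.length ≤ L := le_max_right _ _
      have hulen : u₁''.length = u₂''.length := by omega
      have hmlen : m₁''.length = m₂''.length := by
        rw [Nat.mul_comm] at hm₂
        omega
      obtain ⟨rfl, rfl, rfl⟩ := PGA.ofInf_inj hsem hulen hmlen
      exact c₁.trans c₂.symm
  · exact fun h => h.sound
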